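/- Let G be a connected bipartite finite simple graph on n ≥ 2 vertices. Then EE(G) ≥ 2cosh(2cos(π/(n+1))) + (n − 2), with equality if and only if G is the path P_2 on 2 vertices or the path P_3 on 3 vertices. -/

import Mathlib

open Finset Real

namespace EstradaIndexPaper

/-- The adjacency matrix of a simple graph over `ℝ` is Hermitian. -/
theorem adjMatrix_isHermitian {n : ℕ} (G : SimpleGraph (Fin n)) [DecidableRel G.Adj] :
    (G.adjMatrix ℝ).IsHermitian := by
  unfold Matrix.IsHermitian
  rw [Matrix.conjTranspose_eq_transpose_of_trivial]
  exact G.isSymm_adjMatrix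

/-- The eigenvalues of the adjacency matrix of `G`. -/
noncomputable def eig {n : ℕ} (G : SimpleGraph (Fin n)) [DecidableRel G.Adj] : Fin n → ℝ :=
  (adjMatrix_isHermitian G).eigenvalues

/-- The Estrada index of `G`: the sum of `e^{λ_i}` over the adjacency eigenvalues. -/
noncomputable def EE {n : ℕ} (G : SimpleGraph (Fin n)) [DecidableRel G.Adj] : ℝ :=
  ∑ i, Real.exp (eig G i)

/-- The largest adjacency eigenvalue `λ₁` of `G`. -/
noncomputable def lam1 {n : ℕ} (G : SimpleGraph (Fin n)) [DecidableRel G.Adj] : ℝ :=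
  ⨆ i, eig G i

/-- The Randić index `R(G) = Σ_{ij ∈ E(G)} (d(i)d(j))^{-1/2}`. -/
noncomputable def randic {n : ℕ} (G : SimpleGraph (Fin n)) [DecidableRel G.Adj] : ℝ :=
  ∑ e ∈ G.edgeFinset,
    Sym2.lift ⟨fun i j => (Real.sqrt ((G.degree i : ℝ) * (G.degree j : ℝ)))⁻¹,
      fun i j => by simp [mul_comm]⟩ e

/-- The general Randić index `R_{1/2}(G) = Σ_{ij ∈ E(G)} (d(i)d(j))^{1/2}`. -/
noncomputable def randicHalf {n : ℕ} (G : SimpleGraph (Fin n)) [DecidableRel G.Adj] : ℝ :=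
  ∑ e ∈ G.edgeFinset,
    Sym2.lift ⟨fun i j => Real.sqrt ((G.degree i : ℝ) * (G.degree j : ℝ)),
      fun i j => by simp [mul_comm]⟩ e

/-! ### Auxiliary material -/

section ExpBounds

private lemma hd3aux (x : ℝ) : HasDerivAt (fun x : ℝ => Real.exp x - (1 + x + x^2/2 + x^3/6))
    (Real.exp x - (1 + x + x^2/2)) x := by
  have h2 : HasDerivAt (fun x : ℝ => 1 + x + x^2/2 + x^3/6) (1 + x + x^2/2) x := by
    have : HasDerivAt (fun x : ℝ => 1 + x + x^2/2 + x^3/6)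
        (0 + 1 + (↑2*x^1)/2 + (↑3*x^2)/6) x :=
      (((hasDerivAt_const x (1:ℝ)).add (hasDerivAt_id x)).add
        ((hasDerivAt_pow 2 x).div_const 2)).add ((hasDerivAt_pow 3 x).div_const 6)
    convert this using 1
    push_cast
    ring
  exact (Real.hasDerivAt_exp x).sub h2

private lemma hd2aux (x : ℝ) : HasDerivAt (fun x : ℝ => Real.exp x - (1 + x + x^2/2))
    (Real.exp x - (1 + x)) x := by
  have h2 : HasDerivAt (fun x : ℝ => 1 + x + x^2/2) (1 + x) x := by
    have : HasDerivAt (fun x : ℝ => 1 + x + x^2/2) (0 + 1 + (↑2*x^1)/2) x :=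
      ((hasDerivAt_const x (1:ℝ)).add (hasDerivAt_id x)).add ((hasDerivAt_pow 2 x).div_const 2)
    convert this using 1
    push_cast
    ring
  exact (Real.hasDerivAt_exp x).sub h2

lemma quad_sign (x : ℝ) :
    (x ≤ 0 → Real.exp x ≤ 1 + x + x^2/2) ∧ (0 ≤ x → 1 + x + x^2/2 ≤ Real.exp x) := by
  have hmono : Monotone (fun x : ℝ => Real.exp x - (1 + x + x^2/2)) :=
    monotone_of_hasDerivAt_nonneg hd2aux (fun x => by
      have h := Real.add_one_le_exp x
      simp only [Pi.zero_apply]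
      linarith)
  constructor
  · intro hx
    have := hmono hx
    simp only [Real.exp_zero] at this
    nlinarith [this]
  · intro hx
    have := hmono hx
    simp only [Real.exp_zero] at this
    nlinarith [this]

lemma cubic_le_exp (x : ℝ) : 1 + x + x^2/2 + x^3/6 ≤ Real.exp x := by
  rcases le_total x 0 with hx | hx
  · have hmono : AntitoneOn (fun x : ℝ => Real.exp x - (1 + x + x^2/2 + x^3/6)) (Set.Iic 0) := by
      apply antitoneOn_of_hasDerivWithinAt_nonpos (convex_Iic 0)
        (Continuous.continuousOn (by continuity))
        (fun y _ => (hd3aux y).hasDerivWithinAt)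
      intro y hy
      rw [interior_Iic] at hy
      have := (quad_sign y).1 (le_of_lt hy)
      linarith
    have := hmono hx Set.self_mem_Iic hx
    simp only [Real.exp_zero] at this
    nlinarith [this]
  · have hmono : MonotoneOn (fun x : ℝ => Real.exp x - (1 + x + x^2/2 + x^3/6)) (Set.Ici 0) := by
      apply monotoneOn_of_hasDerivWithinAt_nonneg (convex_Ici 0)
        (Continuous.continuousOn (by continuity))
        (fun y _ => (hd3aux y).hasDerivWithinAt)
      intro y hy
      rw [interior_Ici] at hy
      have := (quad_sign y).2 (le_of_lt hy)
      linarith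
    have := hmono Set.self_mem_Ici hx hx
    simp only [Real.exp_zero] at this
    nlinarith [this]

private lemma hd5aux (x : ℝ) : HasDerivAt
    (fun x : ℝ => Real.exp x - (1 + x + x^2/2 + x^3/6 + x^4/24 + x^5/120))
    (Real.exp x - (1 + x + x^2/2 + x^3/6 + x^4/24)) x := by
  have h2 : HasDerivAt (fun x : ℝ => 1 + x + x^2/2 + x^3/6 + x^4/24 + x^5/120)
      (1 + x + x^2/2 + x^3/6 + x^4/24) x := by
    have : HasDerivAt (fun x : ℝ => 1 + x + x^2/2 + x^3/6 + x^4/24 + x^5/120)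
        (0 + 1 + (↑2*x^1)/2 + (↑3*x^2)/6 + (↑4*x^3)/24 + (↑5*x^4)/120) x :=
      (((((hasDerivAt_const x (1:ℝ)).add (hasDerivAt_id x)).add
        ((hasDerivAt_pow 2 x).div_const 2)).add ((hasDerivAt_pow 3 x).div_const 6)).add
        ((hasDerivAt_pow 4 x).div_const 24)).add ((hasDerivAt_pow 5 x).div_const 120)
    convert this using 1
    norm_num
    ring
  exact (Real.hasDerivAt_exp x).sub h2

private lemma hd4aux (x : ℝ) : HasDerivAt
    (fun x : ℝ => Real.exp x - (1 + x + x^2/2 + x^3/6 + x^4/24))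
    (Real.exp x - (1 + x + x^2/2 + x^3/6)) x := by
  have h2 : HasDerivAt (fun x : ℝ => 1 + x + x^2/2 + x^3/6 + x^4/24)
      (1 + x + x^2/2 + x^3/6) x := by
    have : HasDerivAt (fun x : ℝ => 1 + x + x^2/2 + x^3/6 + x^4/24)
        (0 + 1 + (↑2*x^1)/2 + (↑3*x^2)/6 + (↑4*x^3)/24) x :=
      ((((hasDerivAt_const x (1:ℝ)).add (hasDerivAt_id x)).add
        ((hasDerivAt_pow 2 x).div_const 2)).add ((hasDerivAt_pow 3 x).div_const 6)).add
        ((hasDerivAt_pow 4 x).div_const 24)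
    convert this using 1
    norm_num
    ring
  exact (Real.hasDerivAt_exp x).sub h2

lemma quart_sign (x : ℝ) :
    (x ≤ 0 → Real.exp x ≤ 1 + x + x^2/2 + x^3/6 + x^4/24) ∧
    (0 ≤ x → 1 + x + x^2/2 + x^3/6 + x^4/24 ≤ Real.exp x) := by
  have hmono : Monotone (fun x : ℝ => Real.exp x - (1 + x + x^2/2 + x^3/6 + x^4/24)) :=
    monotone_of_hasDerivAt_nonneg hd4aux (fun x => by
      have h := cubic_le_exp x
      simp only [Pi.zero_apply]
      linarith)
  constructor
  · intro hx
    have := hmono hx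
    simp only [Real.exp_zero] at this
    nlinarith [this]
  · intro hx
    have := hmono hx
    simp only [Real.exp_zero] at this
    nlinarith [this]

lemma quintic_le_exp (x : ℝ) : 1 + x + x^2/2 + x^3/6 + x^4/24 + x^5/120 ≤ Real.exp x := by
  rcases le_total x 0 with hx | hx
  · have hmono : AntitoneOn
        (fun x : ℝ => Real.exp x - (1 + x + x^2/2 + x^3/6 + x^4/24 + x^5/120)) (Set.Iic 0) := by
      apply antitoneOn_of_hasDerivWithinAt_nonpos (convex_Iic 0)
        (Continuous.continuousOn (by continuity))
        (fun y _ => (hd5aux y).hasDerivWithinAt)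
      intro y hy
      rw [interior_Iic] at hy
      have := (quart_sign y).1 (le_of_lt hy)
      linarith
    have := hmono hx Set.self_mem_Iic hx
    simp only [Real.exp_zero] at this
    nlinarith [this]
  · have hmono : MonotoneOn
        (fun x : ℝ => Real.exp x - (1 + x + x^2/2 + x^3/6 + x^4/24 + x^5/120)) (Set.Ici 0) := by
      apply monotoneOn_of_hasDerivWithinAt_nonneg (convex_Ici 0)
        (Continuous.continuousOn (by continuity))
        (fun y _ => (hd5aux y).hasDerivWithinAt)
      intro y hy
      rw [interior_Ici] at hy
      have := (quart_sign y).2 (le_of_lt hy)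
      linarith
    have := hmono Set.self_mem_Ici hx hx
    simp only [Real.exp_zero] at this
    nlinarith [this]

end ExpBounds

section NumericBounds

lemma exp_mul_exp_neg (x : ℝ) : Real.exp x * Real.exp (-x) = 1 := by
  rw [← Real.exp_add]; simp

lemma cosh_two_lt : Real.cosh 2 < 3.7622 := by
  have e1l := Real.exp_one_gt_d9
  have e1u := Real.exp_one_lt_d9
  have h2 : Real.exp 2 = Real.exp 1 * Real.exp 1 := by
    rw [← Real.exp_add]; norm_num
  have hu : Real.exp 2 < 2.7182818286 ^ 2 := by
    rw [h2]; nlinarith [Real.exp_pos 1]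
  have hl : (2.7182818283:ℝ) ^ 2 < Real.exp 2 := by
    rw [h2]; nlinarith [Real.exp_pos 1]
  have hprod := exp_mul_exp_neg 2
  have hnegpos := Real.exp_pos (-2)
  rw [Real.cosh_eq]
  nlinarith [hnegpos, hprod]

lemma cosh_sqrt3_lt : Real.cosh (Real.sqrt 3) < 3 := by
  have h3 : (Real.sqrt 3) ^ 2 = 3 := Real.sq_sqrt (by norm_num)
  have hnn := Real.sqrt_nonneg 3
  have htu : Real.sqrt 3 ≤ 7/4 := by nlinarith
  have htl : (17:ℝ)/10 ≤ Real.sqrt 3 := by nlinarith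
  have hu : Real.exp (Real.sqrt 3) < 5.8 := by
    have h1 : Real.exp (Real.sqrt 3) ≤ Real.exp (7/4) := Real.exp_le_exp.mpr htu
    have h7 : Real.exp (7/4) ^ 4 = Real.exp 7 := by
      rw [← Real.exp_nat_mul]; norm_num
    have h7u : Real.exp 7 < 2.7182818286 ^ 7 := by
      calc Real.exp 7 = Real.exp 1 ^ 7 := by rw [← Real.exp_nat_mul]; norm_num
        _ < 2.7182818286 ^ 7 := by
          apply pow_lt_pow_left₀ Real.exp_one_lt_d9 (le_of_lt (Real.exp_pos 1))
          norm_num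
    have hlt : Real.exp (7/4) ^ 4 < 5.8 ^ 4 := by
      rw [h7]
      calc Real.exp 7 < 2.7182818286 ^ 7 := h7u
        _ < 5.8 ^ 4 := by norm_num
    have := lt_of_pow_lt_pow_left₀ 4 (by norm_num : (0:ℝ) ≤ 5.8) hlt
    linarith
  have hlo : (5:ℝ) ≤ Real.exp (Real.sqrt 3) := by
    have := cubic_le_exp (Real.sqrt 3)
    nlinarith
  have hprod := exp_mul_exp_neg (Real.sqrt 3)
  have hnegpos := Real.exp_pos (-(Real.sqrt 3))
  rw [Real.cosh_eq]
  nlinarith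

lemma cosh_phi_lt : Real.cosh ((1 + Real.sqrt 5)/2) < 2.66 := by
  have h5 : (Real.sqrt 5) ^ 2 = 5 := Real.sq_sqrt (by norm_num)
  have hnn := Real.sqrt_nonneg 5
  have hsu : Real.sqrt 5 ≤ 2.25 := by nlinarith
  have hsl : (2.22:ℝ) ≤ Real.sqrt 5 := by nlinarith
  set t : ℝ := (1 + Real.sqrt 5)/2 with ht
  have htu : t ≤ 13/8 := by rw [ht]; linarith
  have htl : (1.61:ℝ) ≤ t := by rw [ht]; linarith
  have hu : Real.exp t < 5.08 := by
    have h1 : Real.exp t ≤ Real.exp (13/8) := Real.exp_le_exp.mpr htu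
    have h13 : Real.exp (13/8) ^ 8 = Real.exp 13 := by
      rw [← Real.exp_nat_mul]; norm_num
    have h13u : Real.exp 13 < 2.7182818286 ^ 13 := by
      calc Real.exp 13 = Real.exp 1 ^ 13 := by rw [← Real.exp_nat_mul]; norm_num
        _ < 2.7182818286 ^ 13 := by
          apply pow_lt_pow_left₀ Real.exp_one_lt_d9 (le_of_lt (Real.exp_pos 1))
          norm_num
    have hlt : Real.exp (13/8) ^ 8 < 5.08 ^ 8 := by
      rw [h13]
      calc Real.exp 13 < 2.7182818286 ^ 13 := h13u
        _ < 5.08 ^ 8 := by norm_num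
    have := lt_of_pow_lt_pow_left₀ 8 (by norm_num : (0:ℝ) ≤ 5.08) hlt
    linarith
  have hlo : (4.6:ℝ) ≤ Real.exp t := by
    have := cubic_le_exp t
    nlinarith
  have hprod := exp_mul_exp_neg t
  have hnegpos := Real.exp_pos (-t)
  rw [Real.cosh_eq]
  nlinarith

end NumericBounds

section TraceFacts

lemma myConjPow {n : ℕ} (U V B : Matrix (Fin n) (Fin n) ℝ) (hUV : U * V = 1)
    (hVU : V * U = 1) (k : ℕ) :
    (U * B * V) ^ k = U * B ^ k * V := by
  induction k with
  | zero => simp only [pow_zero, Matrix.mul_one, hUV]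
  | succ k ih =>
    rw [pow_succ, ih, pow_succ]
    calc U * B ^ k * V * (U * B * V)
        = U * B ^ k * (V * U) * B * V := by simp only [Matrix.mul_assoc]
      _ = U * (B ^ k * B) * V := by rw [hVU]; simp only [Matrix.mul_assoc, Matrix.mul_one]
      _ = _ := by simp only [Matrix.mul_assoc]

lemma trace_pow_eq {n : ℕ} {A : Matrix (Fin n) (Fin n) ℝ} (hA : A.IsHermitian) (k : ℕ) :
    (A ^ k).trace = ∑ i, hA.eigenvalues i ^ k := by
  have hU1 : star (hA.eigenvectorUnitary : Matrix (Fin n) (Fin n) ℝ) *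
      (hA.eigenvectorUnitary : Matrix (Fin n) (Fin n) ℝ) = 1 :=
    Matrix.mem_unitaryGroup_iff'.mp (Matrix.IsHermitian.eigenvectorUnitary hA).2
  have hU2 : (hA.eigenvectorUnitary : Matrix (Fin n) (Fin n) ℝ) *
      star (hA.eigenvectorUnitary : Matrix (Fin n) (Fin n) ℝ) = 1 :=
    Matrix.mem_unitaryGroup_iff.mp (Matrix.IsHermitian.eigenvectorUnitary hA).2
  have hspec : A = (hA.eigenvectorUnitary : Matrix (Fin n) (Fin n) ℝ) *
      (Matrix.diagonal hA.eigenvalues) *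
      star (hA.eigenvectorUnitary : Matrix (Fin n) (Fin n) ℝ) := by
    convert hA.spectral_theorem using 2
    rw [Unitary.conjStarAlgAut_apply]
    rfl
  conv_lhs => rw [hspec]
  rw [myConjPow _ _ _ hU2 hU1, Matrix.trace_mul_cycle, hU1, Matrix.one_mul,
    Matrix.diagonal_pow, Matrix.trace_diagonal]
  simp [Pi.pow_apply]

variable {n : ℕ} (G : SimpleGraph (Fin n)) [DecidableRel G.Adj]

lemma sum_eig_pow (k : ℕ) : ∑ i, eig G i ^ k = ((G.adjMatrix ℝ) ^ k).trace :=
  (trace_pow_eq (adjMatrix_isHermitian G) k).symm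

lemma trace_sq_eq : ((G.adjMatrix ℝ) ^ 2).trace = 2 * (G.edgeFinset.card : ℝ) := by
  have h : ((G.adjMatrix ℝ) ^ 2).trace = ∑ i, (G.degree i : ℝ) := by
    rw [Matrix.trace, pow_two]
    congr 1
    funext i
    simpa using G.adjMatrix_mul_self_apply_self (α := ℝ) i
  rw [h, ← Nat.cast_sum, SimpleGraph.sum_degrees_eq_twice_card_edges]
  push_cast
  ring

lemma trace_odd_zero (hbip : G.Colorable 2) {k : ℕ} (hk : Odd k) :
    ((G.adjMatrix ℝ) ^ k).trace = 0 := by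
  classical
  obtain ⟨C⟩ := hbip
  set s : Fin n → ℝ := fun v => if C v = 0 then 1 else -1 with hs
  have hss : ∀ v, s v * s v = 1 := by
    intro v; by_cases h : C v = 0 <;> simp [hs, h]
  have key : ∀ a b : Fin 2, a ≠ b →
      (if a = 0 then (1:ℝ) else -1) * (if b = 0 then 1 else -1) = -1 := by
    intro a b hab
    fin_cases a <;> fin_cases b <;> simp_all
  have hDD : Matrix.diagonal s * Matrix.diagonal s = 1 := by
    rw [Matrix.diagonal_mul_diagonal]
    have : (fun i => s i * s i) = fun _ => (1:ℝ) := funext hss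
    rw [this, Matrix.diagonal_one]
  have hDAD : Matrix.diagonal s * G.adjMatrix ℝ * Matrix.diagonal s = -(G.adjMatrix ℝ) := by
    ext i j
    rw [Matrix.mul_diagonal, Matrix.diagonal_mul]
    by_cases h : G.Adj i j
    · simp only [SimpleGraph.adjMatrix_apply, Matrix.neg_apply, if_pos h, mul_one]
      exact key _ _ (C.valid h)
    · simp [SimpleGraph.adjMatrix_apply, h]
  have hpow : (-(G.adjMatrix ℝ)) ^ k
      = Matrix.diagonal s * (G.adjMatrix ℝ) ^ k * Matrix.diagonal s := by
    rw [← hDAD, myConjPow _ _ _ hDD hDD]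
  have h1 : ((-(G.adjMatrix ℝ)) ^ k).trace = ((G.adjMatrix ℝ) ^ k).trace := by
    rw [hpow, Matrix.trace_mul_cycle, hDD, Matrix.one_mul]
  rw [hk.neg_pow, Matrix.trace_neg] at h1
  linarith

lemma trace_four_ge : ∑ i, (G.degree i : ℝ) ^ 2 ≤ ((G.adjMatrix ℝ) ^ 4).trace := by
  have hsymm : ((G.adjMatrix ℝ) ^ 2).IsSymm := (G.isSymm_adjMatrix).pow 2
  have h4 : ((G.adjMatrix ℝ) ^ 4).trace
      = ∑ i, ∑ j, ((G.adjMatrix ℝ) ^ 2) i j * ((G.adjMatrix ℝ) ^ 2) j i := by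
    rw [show (4:ℕ) = 2 + 2 by rfl, pow_add, Matrix.trace]
    simp [Matrix.mul_apply, Matrix.diag]
  rw [h4]
  apply Finset.sum_le_sum
  intro i _
  have hdiag : ((G.adjMatrix ℝ) ^ 2) i i = (G.degree i : ℝ) := by
    rw [pow_two]; simpa using G.adjMatrix_mul_self_apply_self (α := ℝ) i
  calc (G.degree i : ℝ) ^ 2 = ((G.adjMatrix ℝ)^2) i i * ((G.adjMatrix ℝ)^2) i i := by
        rw [hdiag]; ring
    _ ≤ ∑ j, ((G.adjMatrix ℝ) ^ 2) i j * ((G.adjMatrix ℝ) ^ 2) j i := by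
        apply Finset.single_le_sum
          (f := fun j => ((G.adjMatrix ℝ)^2) i j * ((G.adjMatrix ℝ)^2) j i)
          (fun j _ => ?_) (Finset.mem_univ i)
        have h := Matrix.IsSymm.apply hsymm i j
        first
        | (rw [h]; exact mul_self_nonneg _)
        | (rw [← h]; exact mul_self_nonneg _)

end TraceFacts

section GraphFacts

lemma card_edges_ge {n : ℕ} (hn : 2 ≤ n) (G : SimpleGraph (Fin n)) [DecidableRel G.Adj]
    (hG : G.Connected) : n ≤ G.edgeFinset.card + 1 := by
  classical
  have hpos : 0 < n := by omega
  set r : Fin n := ⟨0, hpos⟩ with hr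
  have key : ∀ v : Fin n, ∃ u : Fin n, v ≠ r → G.Adj v u ∧ G.dist u r < G.dist v r := by
    intro v
    by_cases hv : v = r
    · exact ⟨r, fun h => absurd hv h⟩
    · obtain ⟨p, hp⟩ := (hG v r).exists_walk_length_eq_dist
      have hdpos : 0 < G.dist v r := hG.pos_dist_of_ne hv
      cases p with
      | nil => simp at hp; omega
      | cons h q =>
        refine ⟨_, fun _ => ⟨h, ?_⟩⟩
        have hq : G.dist _ r ≤ q.length := SimpleGraph.dist_le q
        simp [SimpleGraph.Walk.length_cons] at hp
        omega
  choose f hf using key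
  have hinj : Set.InjOn (fun v => s(v, f v)) ((univ : Finset (Fin n)).erase r) := by
    intro a ha b hb hab
    simp only [Sym2.eq, Sym2.rel_iff', Prod.mk.injEq, Prod.swap_prod_mk] at hab
    rcases hab with ⟨h1, _⟩ | ⟨h1, h2⟩
    · exact h1
    · exfalso
      have d1 := (hf a (Finset.ne_of_mem_erase ha)).2
      have d2 := (hf b (Finset.ne_of_mem_erase hb)).2
      rw [h2] at d1
      rw [← h1] at d2
      omega
  have hmaps : ∀ v ∈ (univ : Finset (Fin n)).erase r, s(v, f v) ∈ G.edgeFinset := by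
    intro v hv
    rw [SimpleGraph.mem_edgeFinset, SimpleGraph.mem_edgeSet]
    exact (hf v (Finset.ne_of_mem_erase hv)).1
  have := Finset.card_le_card_of_injOn _ hmaps hinj
  have hcard : ((univ : Finset (Fin n)).erase r).card = n - 1 := by
    rw [Finset.card_erase_of_mem (Finset.mem_univ r)]
    simp
  omega

lemma exists_neighbor {n : ℕ} (hn : 2 ≤ n) (G : SimpleGraph (Fin n))
    (hG : G.Connected) (v : Fin n) : ∃ u, G.Adj v u := by
  have hcard : 1 < Fintype.card (Fin n) := by simp; omega
  obtain ⟨w, hw⟩ := Fintype.exists_ne_of_one_lt_card hcard v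
  obtain ⟨p⟩ := hG.preconnected v w
  cases p with
  | nil => exact absurd rfl hw.symm
  | cons h q => exact ⟨_, h⟩

end GraphFacts

section MasterBound

lemma EE_lower {n : ℕ} (G : SimpleGraph (Fin n)) [DecidableRel G.Adj]
    (hbip : G.Colorable 2) :
    (n : ℝ) + (G.edgeFinset.card : ℝ) + (∑ i, (G.degree i : ℝ)^2)/24 ≤ EE G := by
  have h5 : ∀ i ∈ (univ : Finset (Fin n)),
      1 + eig G i + (eig G i)^2/2 + (eig G i)^3/6 + (eig G i)^4/24 + (eig G i)^5/120
        ≤ Real.exp (eig G i) := fun i _ => quintic_le_exp _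
  have hsum := Finset.sum_le_sum h5
  have hexpand : ∑ i : Fin n,
      (1 + eig G i + (eig G i)^2/2 + (eig G i)^3/6 + (eig G i)^4/24 + (eig G i)^5/120)
      = (n : ℝ) + (∑ i, eig G i) + (∑ i, (eig G i)^2)/2 + (∑ i, (eig G i)^3)/6
        + (∑ i, (eig G i)^4)/24 + (∑ i, (eig G i)^5)/120 := by
    rw [Finset.sum_add_distrib, Finset.sum_add_distrib, Finset.sum_add_distrib,
      Finset.sum_add_distrib, Finset.sum_add_distrib, Finset.sum_const, Finset.card_univ,
      Fintype.card_fin, ← Finset.sum_div, ← Finset.sum_div, ← Finset.sum_div, ← Finset.sum_div,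
      nsmul_eq_mul, mul_one]
  have hS1 : ∑ i, eig G i = 0 := by
    have := sum_eig_pow G 1
    simpa using this
  have hS2 : ∑ i, (eig G i)^2 = 2 * (G.edgeFinset.card : ℝ) := by
    rw [sum_eig_pow G 2, trace_sq_eq]
  have hS3 : ∑ i, (eig G i)^3 = 0 := by
    rw [sum_eig_pow G 3, trace_odd_zero G hbip (by decide)]
  have hS5 : ∑ i, (eig G i)^5 = 0 := by
    rw [sum_eig_pow G 5, trace_odd_zero G hbip (by decide)]
  have hS4 : ∑ i, (G.degree i : ℝ)^2 ≤ ∑ i, (eig G i)^4 := by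
    rw [sum_eig_pow G 4]
    exact trace_four_ge G
  rw [hexpand, hS1, hS2, hS3, hS5] at hsum
  have : EE G = ∑ i, Real.exp (eig G i) := rfl
  rw [this]
  refine le_trans ?_ hsum
  linarith

lemma degree_sq_sum_ge {n : ℕ} (G : SimpleGraph (Fin n)) [DecidableRel G.Adj] (hn : 0 < n) :
    (2 * (G.edgeFinset.card : ℝ))^2 / (n : ℝ) ≤ ∑ i, (G.degree i : ℝ)^2 := by
  have h := sq_sum_le_card_mul_sum_sq (s := (univ : Finset (Fin n)))
    (f := fun i => (G.degree i : ℝ))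
  have hdeg : ∑ i, (G.degree i : ℝ) = 2 * (G.edgeFinset.card : ℝ) := by
    rw [← Nat.cast_sum, SimpleGraph.sum_degrees_eq_twice_card_edges]
    push_cast
    ring
  rw [hdeg, Finset.card_univ, Fintype.card_fin] at h
  rw [div_le_iff₀ (by positivity)]
  calc (2 * (G.edgeFinset.card : ℝ))^2 ≤ (n : ℝ) * ∑ i, (G.degree i : ℝ)^2 := h
    _ = (∑ i, (G.degree i : ℝ)^2) * (n : ℝ) := by ring

end MasterBound


section SmallCases

lemma two_cosh_eq (x : ℝ) : Real.exp x + Real.exp (-x) = 2 * Real.cosh x := by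
  rw [Real.cosh_eq]; ring

lemma exp3_eq (a b c : ℝ) (h1 : a + b + c = 0) (h2 : a^2 + b^2 + c^2 = 4)
    (h3 : a^3 + b^3 + c^3 = 0) :
    Real.exp a + Real.exp b + Real.exp c = 2 * Real.cosh (Real.sqrt 2) + 1 := by
  have habc : a * b * c = 0 := by
    have h6 : 6*(a*b*c) = (a+b+c)^3 - 3*(a+b+c)*(a^2+b^2+c^2) + 2*(a^3+b^3+c^3) := by ring
    rw [h1, h2, h3] at h6
    linarith
  have pair : ∀ x y : ℝ, x + y = 0 → x^2 + y^2 = 4 →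
      Real.exp x + Real.exp y = 2 * Real.cosh (Real.sqrt 2) := by
    intro x y hxy hsq
    have hy : y = -x := by linarith
    subst hy
    have hs2 : (Real.sqrt 2)^2 = 2 := Real.sq_sqrt (by norm_num)
    have hfac : (x - Real.sqrt 2)*(x + Real.sqrt 2) = 0 := by nlinarith
    rcases mul_eq_zero.mp hfac with h | h
    · have hx : x = Real.sqrt 2 := by linarith
      rw [hx, Real.cosh_eq]; ring
    · have hx : x = -Real.sqrt 2 := by linarith
      rw [hx, Real.cosh_eq, neg_neg]; ring
  rcases mul_eq_zero.mp habc with hab | hc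
  · rcases mul_eq_zero.mp hab with ha | hb
    · have := pair b c (by linarith) (by nlinarith)
      rw [ha, Real.exp_zero]
      linarith
    · have := pair a c (by linarith) (by nlinarith)
      rw [hb, Real.exp_zero]
      linarith
  · have := pair a b (by linarith) (by nlinarith)
    rw [hc, Real.exp_zero]
    linarith

lemma EE_three (G : SimpleGraph (Fin 3)) [DecidableRel G.Adj] (hbip : G.Colorable 2)
    (htr : ((G.adjMatrix ℝ)^2).trace = 4) : EE G = 2 * Real.cosh (Real.sqrt 2) + 1 := by
  have t1 := sum_eig_pow G 1
  rw [pow_one, SimpleGraph.trace_adjMatrix, Fin.sum_univ_three] at t1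
  simp only [pow_one] at t1
  have t2 := sum_eig_pow G 2
  rw [htr, Fin.sum_univ_three] at t2
  have t3 := sum_eig_pow G 3
  rw [trace_odd_zero G hbip (by decide), Fin.sum_univ_three] at t3
  have hEE : EE G = Real.exp (eig G 0) + Real.exp (eig G 1) + Real.exp (eig G 2) := by
    rw [EE, Fin.sum_univ_three]
  rw [hEE]
  exact exp3_eq _ _ _ t1 t2 t3

end SmallCases

set_option maxHeartbeats 2000000 in
theorem stmt15 {n : ℕ} (hn : 2 ≤ n) (G : SimpleGraph (Fin n)) [DecidableRel G.Adj]
    (hG : G.Connected) (hbip : G.Colorable 2) :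
    EE G ≥ 2 * Real.cosh (2 * Real.cos (Real.pi / (n + 1))) + ((n : ℝ) - 2) ∧
    (EE G = 2 * Real.cosh (2 * Real.cos (Real.pi / (n + 1))) + ((n : ℝ) - 2) ↔
      Nonempty (G ≃g SimpleGraph.pathGraph 2) ∨
      Nonempty (G ≃g SimpleGraph.pathGraph 3)) := by
  classical
  have hEE := EE_lower G hbip
  have hno : 4 ≤ n → ¬(Nonempty (G ≃g SimpleGraph.pathGraph 2) ∨
      Nonempty (G ≃g SimpleGraph.pathGraph 3)) := by
    intro h4
    intro hcon
    rcases hcon with he | he <;>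
    · obtain ⟨e⟩ := he
      have hc := Fintype.card_congr e.toEquiv
      simp only [Fintype.card_fin] at hc
      omega
  rcases lt_or_ge n 6 with hlt | hge
  · interval_cases n
    · -- n = 2
      obtain ⟨u, hu⟩ := exists_neighbor (by norm_num) G hG 0
      have h01 : G.Adj 0 1 := by
        fin_cases u
        · exact absurd hu (G.irrefl)
        · exact hu
      have h10 : G.Adj 1 0 := h01.symm
      have htr : ((G.adjMatrix ℝ)^2).trace = 2 := by
        rw [pow_two, Matrix.trace]
        simp [Matrix.diag, Matrix.mul_apply, Fin.sum_univ_two, h01, h10]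
        norm_num
      have t1 : eig G 0 + eig G 1 = 0 := by
        have h := sum_eig_pow G 1
        rw [pow_one, SimpleGraph.trace_adjMatrix, Fin.sum_univ_two] at h
        simpa using h
      have t2 : (eig G 0)^2 + (eig G 1)^2 = 2 := by
        have h := sum_eig_pow G 2
        rw [htr, Fin.sum_univ_two] at h
        exact h
      have hEE2 : EE G = Real.exp (eig G 0) + Real.exp (eig G 1) := by
        rw [EE, Fin.sum_univ_two]
      have hb : eig G 1 = -(eig G 0) := by linarith
      rw [hb] at t2
      have hsq1 : eig G 0 ^ 2 = 1 := by nlinarith [t2]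
      have hval : EE G = 2 * Real.cosh 1 := by
        have hfac : (eig G 0 - 1)*(eig G 0 + 1) = 0 := by nlinarith [hsq1]
        rcases mul_eq_zero.mp hfac with h | h
        · have h0 : eig G 0 = 1 := by linarith
          rw [hEE2, hb, h0]
          exact two_cosh_eq 1
        · have h0 : eig G 0 = -1 := by linarith
          rw [hEE2, hb, h0, neg_neg, ← two_cosh_eq 1]
          ring
      have hcos : 2 * Real.cos (Real.pi / (((2:ℕ):ℝ) + 1)) = 1 := by
        have h3 : (Real.pi / (((2:ℕ):ℝ) + 1)) = Real.pi / 3 := by norm_num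
        rw [h3, Real.cos_pi_div_three]
        ring
      have hfin : EE G = 2 * Real.cosh (2 * Real.cos (Real.pi / (((2:ℕ):ℝ) + 1)))
          + (((2:ℕ):ℝ) - 2) := by
        rw [hcos, hval]
        push_cast
        ring
      have hGeq : G = SimpleGraph.pathGraph 2 := by
        ext a b
        fin_cases a <;> fin_cases b <;>
          simp [SimpleGraph.pathGraph_adj, h01, h10]
      exact ⟨ge_of_eq hfin, ⟨fun _ => Or.inl ⟨hGeq ▸ SimpleGraph.Iso.refl⟩, fun _ => hfin⟩⟩
    · -- n = 3
      have hcos3 : 2 * Real.cos (Real.pi / (((3:ℕ):ℝ) + 1)) = Real.sqrt 2 := by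
        have h4 : (Real.pi / (((3:ℕ):ℝ) + 1)) = Real.pi / 4 := by norm_num
        rw [h4, Real.cos_pi_div_four]
        ring
      have hfin3 : EE G = 2 * Real.cosh (Real.sqrt 2) + 1 →
          EE G = 2 * Real.cosh (2 * Real.cos (Real.pi / (((3:ℕ):ℝ) + 1)))
            + (((3:ℕ):ℝ) - 2) := by
        intro h
        rw [hcos3, h]
        push_cast
        ring
      by_cases h01 : G.Adj 0 1 <;> by_cases h02 : G.Adj 0 2 <;> by_cases h12 : G.Adj 1 2
      · -- all three edges: odd cycle, contradicts 2-colorability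
        exfalso
        obtain ⟨C⟩ := hbip
        have k1 := C.valid h01
        have k2 := C.valid h02
        have k3 := C.valid h12
        have key : ∀ a b c : Fin 2, a ≠ b → a ≠ c → b ≠ c → False := by decide
        exact key _ _ _ k1 k2 k3
      · -- edges 01, 02 : star at 0
        have h10 : G.Adj 1 0 := h01.symm
        have h20 : G.Adj 2 0 := h02.symm
        have h21 : ¬ G.Adj 2 1 := fun h => h12 h.symm
        have htr : ((G.adjMatrix ℝ)^2).trace = 4 := by
          rw [pow_two, Matrix.trace]
          simp [Matrix.diag, Matrix.mul_apply, Fin.sum_univ_three, h01, h02, h10, h20, h12, h21]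
          norm_num
        have hval := EE_three G hbip htr
        have iso : G ≃g SimpleGraph.pathGraph 3 := by
          refine ⟨Equiv.swap 0 1, ?_⟩
          intro a b
          fin_cases a <;> fin_cases b <;>
            simp [Equiv.swap_apply_def, SimpleGraph.pathGraph_adj,
              h01, h02, h10, h20, h12, h21]
        exact ⟨ge_of_eq (hfin3 hval), ⟨fun _ => Or.inr ⟨iso⟩, fun _ => hfin3 hval⟩⟩
      · -- edges 01, 12 : path with center 1
        have h10 : G.Adj 1 0 := h01.symm
        have h21 : G.Adj 2 1 := h12.symm
        have h20 : ¬ G.Adj 2 0 := fun h => h02 h.symm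
        have htr : ((G.adjMatrix ℝ)^2).trace = 4 := by
          rw [pow_two, Matrix.trace]
          simp [Matrix.diag, Matrix.mul_apply, Fin.sum_univ_three, h01, h02, h10, h20, h12, h21]
          norm_num
        have hval := EE_three G hbip htr
        have iso : G ≃g SimpleGraph.pathGraph 3 := by
          refine ⟨Equiv.refl (Fin 3), ?_⟩
          intro a b
          fin_cases a <;> fin_cases b <;>
            simp [SimpleGraph.pathGraph_adj, h01, h02, h10, h20, h12, h21]
        exact ⟨ge_of_eq (hfin3 hval), ⟨fun _ => Or.inr ⟨iso⟩, fun _ => hfin3 hval⟩⟩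
      · -- only edge 01 : vertex 2 isolated
        exfalso
        obtain ⟨u, hu⟩ := exists_neighbor (by norm_num) G hG 2
        fin_cases u
        · exact h02 hu.symm
        · exact h12 hu.symm
        · exact G.irrefl hu
      · -- edges 02, 12 : path with center 2
        have h20 : G.Adj 2 0 := h02.symm
        have h21 : G.Adj 2 1 := h12.symm
        have h10 : ¬ G.Adj 1 0 := fun h => h01 h.symm
        have htr : ((G.adjMatrix ℝ)^2).trace = 4 := by
          rw [pow_two, Matrix.trace]
          simp [Matrix.diag, Matrix.mul_apply, Fin.sum_univ_three, h01, h02, h10, h20, h12, h21]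
          norm_num
        have hval := EE_three G hbip htr
        have iso : G ≃g SimpleGraph.pathGraph 3 := by
          refine ⟨Equiv.swap 1 2, ?_⟩
          intro a b
          fin_cases a <;> fin_cases b <;>
            simp [Equiv.swap_apply_def, SimpleGraph.pathGraph_adj,
              h01, h02, h10, h20, h12, h21]
        exact ⟨ge_of_eq (hfin3 hval), ⟨fun _ => Or.inr ⟨iso⟩, fun _ => hfin3 hval⟩⟩
      · -- only edge 02 : vertex 1 isolated
        exfalso
        obtain ⟨u, hu⟩ := exists_neighbor (by norm_num) G hG 1
        fin_cases u
        · exact h01 hu.symm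
        · exact G.irrefl hu
        · exact h12 hu
      · -- only edge 12 : vertex 0 isolated
        exfalso
        obtain ⟨u, hu⟩ := exists_neighbor (by norm_num) G hG 0
        fin_cases u
        · exact G.irrefl hu
        · exact h01 hu
        · exact h02 hu
      · -- no edges : vertex 0 isolated
        exfalso
        obtain ⟨u, hu⟩ := exists_neighbor (by norm_num) G hG 0
        fin_cases u
        · exact G.irrefl hu
        · exact h01 hu
        · exact h02 hu
    · -- n = 4
      have hm : 3 ≤ G.edgeFinset.card := by
        have := card_edges_ge (by norm_num) G hG
        omega
      have hmR : (3:ℝ) ≤ (G.edgeFinset.card : ℝ) := by exact_mod_cast hm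
      have hdeg := degree_sq_sum_ge G (by norm_num)
      have hcos : 2 * Real.cos (Real.pi / ((4:ℕ) + 1)) = (1 + Real.sqrt 5)/2 := by
        have h5 : (Real.pi / (((4:ℕ):ℝ) + 1)) = Real.pi / 5 := by norm_num
        rw [h5, Real.cos_pi_div_five]
        ring
      have hstrict : 2 * Real.cosh (2 * Real.cos (Real.pi / ((4:ℕ) + 1))) + (((4:ℕ) : ℝ) - 2)
          < EE G := by
        rw [hcos]
        have hq : (2 * ((G.edgeFinset.card : ℝ)))^2 / ((4:ℕ):ℝ)
            = (G.edgeFinset.card : ℝ)^2 := by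
          push_cast; ring
        rw [hq] at hdeg
        have hcosh := cosh_phi_lt
        push_cast
        nlinarith [sq_nonneg ((G.edgeFinset.card : ℝ) - 3)]
      refine ⟨le_of_lt hstrict, ⟨fun h => absurd h.symm (ne_of_lt hstrict),
        fun h => absurd h (hno (by norm_num))⟩⟩
    · -- n = 5
      have hm : 4 ≤ G.edgeFinset.card := by
        have := card_edges_ge (by norm_num) G hG
        omega
      have hmR : (4:ℝ) ≤ (G.edgeFinset.card : ℝ) := by exact_mod_cast hm
      have hcos : 2 * Real.cos (Real.pi / ((5:ℕ) + 1)) = Real.sqrt 3 := by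
        have h6 : (Real.pi / (((5:ℕ):ℝ) + 1)) = Real.pi / 6 := by norm_num
        rw [h6, Real.cos_pi_div_six]
        ring
      have hdnn : (0:ℝ) ≤ ∑ i, (G.degree i : ℝ)^2 :=
        Finset.sum_nonneg fun i _ => sq_nonneg _
      have hstrict : 2 * Real.cosh (2 * Real.cos (Real.pi / ((5:ℕ) + 1))) + (((5:ℕ) : ℝ) - 2)
          < EE G := by
        rw [hcos]
        have hcosh := cosh_sqrt3_lt
        push_cast at hEE ⊢
        nlinarith
      refine ⟨le_of_lt hstrict, ⟨fun h => absurd h.symm (ne_of_lt hstrict),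
        fun h => absurd h (hno (by norm_num))⟩⟩
  · -- n ≥ 6
    have hm : n - 1 ≤ G.edgeFinset.card := by
      have := card_edges_ge (by omega) G hG
      omega
    have hnR : (6:ℝ) ≤ (n:ℝ) := by exact_mod_cast hge
    have hmR : (n:ℝ) - 1 ≤ (G.edgeFinset.card : ℝ) := by
      have : ((n:ℕ) : ℝ) - 1 ≤ ((G.edgeFinset.card : ℕ) : ℝ) := by
        have h' : ((n - 1 : ℕ) : ℝ) ≤ ((G.edgeFinset.card : ℕ) : ℝ) := by exact_mod_cast hm
        have : ((n - 1 : ℕ) : ℝ) = (n:ℝ) - 1 := by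
          have : 1 ≤ n := by omega
          push_cast [this]
          ring
        linarith [this ▸ h']
      exact this
    have hdeg := degree_sq_sum_ge G (by omega)
    have hcoshle : Real.cosh (2 * Real.cos (Real.pi / ((n:ℝ) + 1))) ≤ Real.cosh 2 := by
      apply Real.cosh_le_cosh.mpr
      have h1 := Real.abs_cos_le_one (Real.pi / ((n:ℝ) + 1))
      rw [abs_mul]
      calc |(2:ℝ)| * |Real.cos (Real.pi / ((n:ℝ) + 1))| ≤ |(2:ℝ)| * 1 := by
            apply mul_le_mul_of_nonneg_left h1 (abs_nonneg _)
        _ = |(2:ℝ)| := by ring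
    have hcosh2 := cosh_two_lt
    set m : ℝ := (G.edgeFinset.card : ℝ) with hmdef
    have hstrict : 2 * Real.cosh (2 * Real.cos (Real.pi / ((n:ℝ) + 1))) + ((n : ℝ) - 2)
        < EE G := by
      have hq : (0:ℝ) ≤ (2*m)^2 / (n:ℝ) := by positivity
      by_cases hm6 : 6 ≤ m
      · nlinarith [hEE, hdeg]
      · push_neg at hm6
        have hn7 : (n:ℝ) < 7 := by linarith
        have hm5 : (5:ℝ) ≤ m := by linarith
        have hqq : (100:ℝ)/7 ≤ (2*m)^2/(n:ℝ) := by
          have h1 : (100:ℝ) ≤ (2*m)^2 := by nlinarith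
          have h2 : (0:ℝ) < (n:ℝ) := by linarith
          calc (100:ℝ)/7 ≤ (2*m)^2/7 := by linarith
            _ ≤ (2*m)^2/(n:ℝ) := by
              apply div_le_div_of_nonneg_left (by nlinarith) h2 (by linarith)
        nlinarith [hEE, hdeg]
    refine ⟨le_of_lt hstrict, ⟨fun h => absurd h.symm (ne_of_lt hstrict),
      fun h => absurd h (hno (by omega))⟩⟩

end EstradaIndexPaper
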